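/- arXiv:2209.07027 — 2 statements merged into one kernel-verified Lean document; each statement's English description precedes it below -/
import Mathlib

section
/- Let X be a measurable space, H a hypothesis class on X, and fix a measurable ideal labeling set A* ⊆ X. Let Q and P_1, …, P_K be probability measures on X, and let φ_1, …, φ_K be non-negative reals with Σ_i φ_i = 1. Let S be a probability measure on X satisfying d_{HΔH}(Σ_i φ_i P_i, S) ≤ max_{i,j} d_{HΔH}(P_i, P_j). Then for every hypothesis A ∈ H and every pair of hypotheses A', A'' ∈ H: ε_Q(A) ≤ (ε_S(A') + ε_Q(A')) + (ε_{Σ_i φ_i P_i}(A'') + ε_S(A'')) + Σ_i φ_i ε_{P_i}(A) + (1/2)·d_{HΔH}(S, Q) + (1/2)·max_{i,j} d_{HΔH}(P_i, P_j). -/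
open MeasureTheory

/-- Error of hypothesis `A` w.r.t. measure `P` and ideal labeling set `Astar`:
the probability of the symmetric difference `A Δ Astar`. -/
noncomputable def errP {X : Type*} [MeasurableSpace X]
    (P : Measure X) (Astar A : Set X) : ℝ :=
  (P (symmDiff A Astar)).toReal

/-- The `H`-divergence `d_H(P,Q) = 2 · sup_{A ∈ H} |P(A) − Q(A)|`. -/
noncomputable def dH {X : Type*} [MeasurableSpace X]
    (H : Set (Set X)) (P Q : Measure X) : ℝ :=
  2 * sSup ((fun A => |(P A).toReal - (Q A).toReal|) '' H)

/-- The symmetric-difference hypothesis class `HΔH`. -/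
def symmDiffClass {X : Type*} (H : Set (Set X)) : Set (Set X) :=
  {C | ∃ A ∈ H, ∃ B ∈ H, C = symmDiff A B}

/-- Triangle inequality for errors under a finite measure. -/
lemma errP_triangle {X : Type*} [MeasurableSpace X] (μ : Measure X)
    [IsFiniteMeasure μ] (Astar A B : Set X) :
    errP μ Astar A ≤ (μ (symmDiff A B)).toReal + errP μ Astar B := by
  have h1 : μ (symmDiff A Astar) ≤ μ (symmDiff A B) + μ (symmDiff B Astar) :=
    (measure_mono (symmDiff_triangle A B Astar)).trans (measure_union_le _ _)
  have h2 : μ (symmDiff A B) + μ (symmDiff B Astar) ≠ ⊤ :=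
    ENNReal.add_ne_top.2 ⟨measure_ne_top _ _, measure_ne_top _ _⟩
  calc errP μ Astar A ≤ (μ (symmDiff A B) + μ (symmDiff B Astar)).toReal :=
        ENNReal.toReal_mono h2 h1
    _ = (μ (symmDiff A B)).toReal + errP μ Astar B := by
        rw [ENNReal.toReal_add (measure_ne_top _ _) (measure_ne_top _ _)]; rfl

/-- For finite measures bounded by 1, a single set's discrepancy is at most half
the `H`-divergence. -/
lemma sub_le_half_dH {X : Type*} [MeasurableSpace X] (H : Set (Set X))
    (μ ν : Measure X) (hμ : ∀ E : Set X, μ E ≤ 1) (hν : ∀ E : Set X, ν E ≤ 1)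
    {C : Set X} (hC : C ∈ H) :
    (μ C).toReal - (ν C).toReal ≤ (1 / 2) * dH H μ ν := by
  have hbdd : BddAbove ((fun A => |(μ A).toReal - (ν A).toReal|) '' H) := by
    refine ⟨1, ?_⟩
    rintro x ⟨A, -, rfl⟩
    have h1 : (μ A).toReal ≤ 1 := by
      have := hμ A
      simpa using ENNReal.toReal_mono (by simp) this
    have h2 : (ν A).toReal ≤ 1 := by
      have := hν A
      simpa using ENNReal.toReal_mono (by simp) this
    have h3 : (0:ℝ) ≤ (μ A).toReal := ENNReal.toReal_nonneg
    have h4 : (0:ℝ) ≤ (ν A).toReal := ENNReal.toReal_nonneg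
    rw [abs_le]; constructor <;> linarith
  have hmem : |(μ C).toReal - (ν C).toReal| ∈
      ((fun A => |(μ A).toReal - (ν A).toReal|) '' H) := ⟨C, hC, rfl⟩
  have := le_csSup hbdd hmem
  have habs : (μ C).toReal - (ν C).toReal ≤ |(μ C).toReal - (ν C).toReal| :=
    le_abs_self _
  unfold dH
  linarith

/-- The intermediate inequality (equation p1s3) in the proof of Proposition 2.1,
before minimizing over the set of intermediate distributions `S`. -/
theorem diversify_intermediate_bound
    {X : Type*} [MeasurableSpace X] {K : ℕ}
    (H : Set (Set X)) (hHmeas : ∀ A ∈ H, MeasurableSet A)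
    (Astar : Set X) (hAstar : MeasurableSet Astar)
    (Q : Measure X) [IsProbabilityMeasure Q]
    (P : Fin K → Measure X) (hP : ∀ i, IsProbabilityMeasure (P i))
    (φ : Fin K → ℝ) (hφ : ∀ i, 0 ≤ φ i) (hφ1 : ∑ i, φ i = 1)
    (S : Measure X) [IsProbabilityMeasure S]
    (hS : dH (symmDiffClass H) (∑ i, ENNReal.ofReal (φ i) • P i) S ≤
      ⨆ i, ⨆ j, dH (symmDiffClass H) (P i) (P j)) :
    ∀ A ∈ H, ∀ A' ∈ H, ∀ A'' ∈ H,
      errP Q Astar A ≤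
        (errP S Astar A' + errP Q Astar A') +
          (errP (∑ i, ENNReal.ofReal (φ i) • P i) Astar A'' + errP S Astar A'')
          + ∑ i, φ i * errP (P i) Astar A
          + (1 / 2) * dH (symmDiffClass H) S Q
          + (1 / 2) * ⨆ i, ⨆ j, dH (symmDiffClass H) (P i) (P j) := by
  intro A hA A' hA' A'' hA''
  set Pφ : Measure X := ∑ i, ENNReal.ofReal (φ i) • P i with hPφ
  have hPφ_apply : ∀ E : Set X, Pφ E = ∑ i, ENNReal.ofReal (φ i) * P i E := by
    intro E
    simp [hPφ, Measure.finset_sum_apply, Measure.smul_apply, smul_eq_mul]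
  have hPφ_le : ∀ E : Set X, Pφ E ≤ 1 := by
    intro E
    rw [hPφ_apply]
    calc ∑ i, ENNReal.ofReal (φ i) * P i E ≤ ∑ i, ENNReal.ofReal (φ i) * 1 := by
          refine Finset.sum_le_sum fun i _ => ?_
          exact mul_le_mul_right (prob_le_one) _
      _ = 1 := by
          simp only [mul_one]
          rw [← ENNReal.ofReal_sum_of_nonneg (fun i _ => hφ i), hφ1,
            ENNReal.ofReal_one]
  haveI : IsFiniteMeasure Pφ :=
    ⟨lt_of_le_of_lt (hPφ_le _) (by norm_num)⟩
  have hQ_le : ∀ E : Set X, Q E ≤ 1 := fun E => prob_le_one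
  have hS_le : ∀ E : Set X, S E ≤ 1 := fun E => prob_le_one
  -- membership of symmetric differences in HΔH
  have hAA' : symmDiff A A' ∈ symmDiffClass H := ⟨A, hA, A', hA', rfl⟩
  have hAA'' : symmDiff A A'' ∈ symmDiffClass H := ⟨A, hA, A'', hA'', rfl⟩
  -- step 1: ε_Q(A) ≤ Q(AΔA') + ε_Q(A')
  have step1 : errP Q Astar A ≤ (Q (symmDiff A A')).toReal + errP Q Astar A' :=
    errP_triangle Q Astar A A'
  -- step 2: Q(AΔA') ≤ S(AΔA') + (1/2) dH(S,Q)
  have step2 : (Q (symmDiff A A')).toReal ≤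
      (S (symmDiff A A')).toReal + (1 / 2) * dH (symmDiffClass H) S Q := by
    have := sub_le_half_dH (symmDiffClass H) Q S hQ_le hS_le hAA'
    have hsym : dH (symmDiffClass H) Q S = dH (symmDiffClass H) S Q := by
      unfold dH
      congr 1
      congr 1
      ext x
      constructor <;> rintro ⟨B, hB, rfl⟩ <;> exact ⟨B, hB, (abs_sub_comm _ _)⟩
    linarith [hsym ▸ this]
  -- step 3: S(AΔA') ≤ ε_S(A') + ε_S(A)
  have step3 : (S (symmDiff A A')).toReal ≤ errP S Astar A' + errP S Astar A := by
    have := errP_triangle S A' A Astar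
    simp only [errP] at this ⊢
    rw [symmDiff_comm Astar A'] at this
    linarith [this]
  -- step 4: ε_S(A) ≤ S(AΔA'') + ε_S(A'')
  have step4 : errP S Astar A ≤ (S (symmDiff A A'')).toReal + errP S Astar A'' :=
    errP_triangle S Astar A A''
  -- step 5: S(AΔA'') ≤ Pφ(AΔA'') + (1/2) dH(Pφ,S) ≤ Pφ(AΔA'') + (1/2) max
  have step5 : (S (symmDiff A A'')).toReal ≤
      (Pφ (symmDiff A A'')).toReal +
        (1 / 2) * ⨆ i, ⨆ j, dH (symmDiffClass H) (P i) (P j) := by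
    have h := sub_le_half_dH (symmDiffClass H) S Pφ hS_le hPφ_le hAA''
    have hsym : dH (symmDiffClass H) S Pφ = dH (symmDiffClass H) Pφ S := by
      unfold dH
      congr 1
      congr 1
      ext x
      constructor <;> rintro ⟨B, hB, rfl⟩ <;> exact ⟨B, hB, (abs_sub_comm _ _)⟩
    rw [hsym] at h
    nlinarith [hS, h]
  -- step 6: Pφ(AΔA'') ≤ ε_Pφ(A'') + ε_Pφ(A)
  have step6 : (Pφ (symmDiff A A'')).toReal ≤
      errP Pφ Astar A'' + errP Pφ Astar A := by
    have := errP_triangle Pφ A'' A Astar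
    simp only [errP] at this ⊢
    rw [symmDiff_comm Astar A''] at this
    linarith [this]
  -- decomposition of ε_Pφ(A)
  have hdecomp : errP Pφ Astar A = ∑ i, φ i * errP (P i) Astar A := by
    simp only [errP, hPφ_apply]
    rw [ENNReal.toReal_sum]
    · refine Finset.sum_congr rfl fun i _ => ?_
      rw [ENNReal.toReal_mul, ENNReal.toReal_ofReal (hφ i)]
    · intro i _
      exact ENNReal.mul_ne_top ENNReal.ofReal_ne_top (measure_ne_top _ _)
  have herrS : errP Pφ Astar A'' = errP Pφ Astar A'' := rfl
  rw [hdecomp] at step6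
  linarith
end

section
/- Let X be a measurable space, H a hypothesis class on X, and fix a measurable ideal labeling set A* ⊆ X. Let P and Q be probability measures on X. Then for every hypothesis A ∈ H and every hypothesis A' ∈ H: ε_Q(A) ≤ (ε_P(A') + ε_Q(A')) + ε_P(A) + (1/2)·d_{HΔH}(Q, P). -/
open MeasureTheory

/-- Triangle inequality for errors (real-valued, finite measures). -/
lemma err_triangle {X : Type*} [MeasurableSpace X]
    (μ : Measure X) [IsFiniteMeasure μ] (A B C : Set X) :
    (μ (symmDiff A C)).toReal ≤ (μ (symmDiff A B)).toReal + (μ (symmDiff B C)).toReal := by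
  have h1 : μ (symmDiff A C) ≤ μ (symmDiff A B) + μ (symmDiff B C) :=
    le_trans (measure_mono (symmDiff_triangle A B C)) (measure_union_le _ _)
  have hAB : μ (symmDiff A B) ≠ ⊤ := measure_ne_top μ _
  have hBC : μ (symmDiff B C) ≠ ⊤ := measure_ne_top μ _
  calc (μ (symmDiff A C)).toReal
      ≤ (μ (symmDiff A B) + μ (symmDiff B C)).toReal :=
        ENNReal.toReal_mono (by simp [hAB, hBC]) h1
    _ = (μ (symmDiff A B)).toReal + (μ (symmDiff B C)).toReal :=
        ENNReal.toReal_add hAB hBC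

/-- Theorem A.1 of the paper: the single-source domain adaptation bound
(modified from Ben-David et al.), with the ideal joint error made explicit
as `errP P Astar A' + errP Q Astar A'`. -/
theorem domain_adaptation_bound
    {X : Type*} [MeasurableSpace X]
    (H : Set (Set X)) (hHmeas : ∀ A ∈ H, MeasurableSet A)
    (Astar : Set X) (hAstar : MeasurableSet Astar)
    (P Q : Measure X) [IsProbabilityMeasure P] [IsProbabilityMeasure Q] :
    ∀ A ∈ H, ∀ A' ∈ H,
      errP Q Astar A ≤
        (errP P Astar A' + errP Q Astar A') + errP P Astar A
          + (1 / 2) * dH (symmDiffClass H) Q P := by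
  intro A hA A' hA'
  set C : Set X := symmDiff A A' with hC
  have hCmem : C ∈ symmDiffClass H := ⟨A, hA, A', hA', rfl⟩
  -- the sup set and its bound
  set S : Set ℝ := (fun A => |(Q A).toReal - (P A).toReal|) '' (symmDiffClass H) with hS
  have hbdd : BddAbove S := by
    refine ⟨1, ?_⟩
    rintro x ⟨B, _, rfl⟩
    have hQ : (Q B).toReal ≤ 1 := by
      have := prob_le_one (μ := Q) (s := B)
      simpa using ENNReal.toReal_mono (by simp) this
    have hP : (P B).toReal ≤ 1 := by
      have := prob_le_one (μ := P) (s := B)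
      simpa using ENNReal.toReal_mono (by simp) this
    have h0Q : 0 ≤ (Q B).toReal := ENNReal.toReal_nonneg
    have h0P : 0 ≤ (P B).toReal := ENNReal.toReal_nonneg
    rw [abs_sub_le_iff]
    constructor <;> linarith
  have hmem : |(Q C).toReal - (P C).toReal| ≤ sSup S :=
    le_csSup hbdd ⟨C, hCmem, rfl⟩
  have hhalf : |(Q C).toReal - (P C).toReal| ≤ (1 / 2) * dH (symmDiffClass H) Q P := by
    unfold dH
    rw [← hS]
    linarith
  -- main chain
  have h1 : errP Q Astar A ≤ errP Q Astar A' + (Q C).toReal := by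
    unfold errP
    have := err_triangle Q A A' Astar
    rw [symmDiff_comm A A'] at this
    -- this : Q(A Δ Astar) ≤ Q(A' Δ A) ... careful
    linarith [err_triangle Q A A' Astar]
  have h2 : (Q C).toReal ≤ (P C).toReal + |(Q C).toReal - (P C).toReal| := by
    have := abs_sub_abs_le_abs_sub (Q C).toReal (P C).toReal
    cases le_total ((Q C).toReal) ((P C).toReal) with
    | inl h => linarith [abs_nonneg ((Q C).toReal - (P C).toReal)]
    | inr h => have := le_abs_self ((Q C).toReal - (P C).toReal); linarith
  have h3 : (P C).toReal ≤ errP P Astar A + errP P Astar A' := by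
    unfold errP
    have := err_triangle P A Astar A'
    have hcomm : symmDiff Astar A' = symmDiff A' Astar := symmDiff_comm _ _
    rw [hcomm] at this
    simpa [hC] using this
  linarith
end
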